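/- Fix n ≥ 1, d ≥ 2 and configurations x, y : Fin n → ℝ^d. Let ω be the uniform probability measure on the unit sphere S^{d−1} ⊂ ℝ^d, and suppose that for each unit vector θ one chooses θ-sorting permutations σ_θ for x and τ_θ for y in such a way that θ ↦ SWGG(x,y,θ;σ_θ,τ_θ) is measurable. Then the squared Wasserstein distance is bounded above by the projected Wasserstein distance: W²(x,y) ≤ ∫_{S^{d−1}} SWGG(x,y,θ;σ_θ,τ_θ) dω(θ). -/

import Mathlib

open scoped RealInnerProductSpace

/-- The SWGG value associated to configurations `x, y` and permutations `σ, τ`: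
`(1/n) Σ_i ‖x_{σ(i)} − y_{τ(i)}‖²`. -/
noncomputable def SWGG {n d : ℕ} (x y : Fin n → EuclideanSpace ℝ (Fin d))
    (σ τ : Equiv.Perm (Fin n)) : ℝ :=
  (n : ℝ)⁻¹ * ∑ i, ‖x (σ i) - y (τ i)‖ ^ 2

/-- A permutation `σ` is θ-sorting for `x` if `i ↦ ⟨x_{σ(i)}, θ⟩` is nondecreasing. -/
def IsSorting {n d : ℕ} (θ : EuclideanSpace ℝ (Fin d))
    (x : Fin n → EuclideanSpace ℝ (Fin d)) (σ : Equiv.Perm (Fin n)) : Prop :=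
  Monotone fun i => ⟪x (σ i), θ⟫

/-- Squared 2-Wasserstein distance between the uniform empirical measures of `x` and `y`:
`(1/n) · min_ρ Σ_i ‖x_i − y_{ρ(i)}‖²`. -/
noncomputable def Wsq {n d : ℕ} (x y : Fin n → EuclideanSpace ℝ (Fin d)) : ℝ :=
  (n : ℝ)⁻¹ * ⨅ ρ : Equiv.Perm (Fin n), ∑ i, ‖x i - y (ρ i)‖ ^ 2

/-- `min-SWGG`: the infimum of `SWGG x y θ σ τ` over unit vectors `θ` and
θ-sorting permutations `σ` for `x`, `τ` for `y`. -/
noncomputable def minSWGG {n d : ℕ} (x y : Fin n → EuclideanSpace ℝ (Fin d)) : ℝ :=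
  sInf { r : ℝ | ∃ θ : EuclideanSpace ℝ (Fin d), ∃ σ τ : Equiv.Perm (Fin n),
    ‖θ‖ = 1 ∧ IsSorting θ x σ ∧ IsSorting θ y τ ∧ r = SWGG x y σ τ }

open MeasureTheory

/-- The uniform probability measure on the unit sphere of `ℝ^d`: the normalization of the
surface measure obtained from the Lebesgue (Haar) measure on `ℝ^d`. -/
noncomputable def uniformSphere (d : ℕ) :
    Measure (Metric.sphere (0 : EuclideanSpace ℝ (Fin d)) 1) :=
  ((volume : Measure (EuclideanSpace ℝ (Fin d))).toSphere Set.univ)⁻¹ •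
    (volume : Measure (EuclideanSpace ℝ (Fin d))).toSphere

lemma wsq_le_swgg {n d : ℕ} (x y : Fin n → EuclideanSpace ℝ (Fin d))
    (σ τ : Equiv.Perm (Fin n)) : Wsq x y ≤ SWGG x y σ τ := by
  unfold Wsq SWGG
  rcases Nat.eq_zero_or_pos n with hn | hn
  · subst hn; simp
  apply mul_le_mul_of_nonneg_left _ (by positivity)
  have h : ∑ i, ‖x (σ i) - y (τ i)‖ ^ 2
      = ∑ i, ‖x i - y ((τ * σ⁻¹) i)‖ ^ 2 := by
    rw [← Equiv.sum_comp σ (fun i => ‖x i - y ((τ * σ⁻¹) i)‖ ^ 2)]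
    simp [Equiv.Perm.mul_apply]
  rw [h]
  exact ciInf_le (Finite.bddBelow_range _) (τ * σ⁻¹)

lemma uniformSphere_isProbability (d : ℕ) (hd : 1 ≤ d) :
    IsProbabilityMeasure (uniformSphere d) := by
  constructor
  rw [uniformSphere, Measure.smul_apply, smul_eq_mul]
  have h : (volume : Measure (EuclideanSpace ℝ (Fin d))).toSphere Set.univ
      = Module.finrank ℝ (EuclideanSpace ℝ (Fin d)) * volume (Metric.ball (0 : EuclideanSpace ℝ (Fin d)) 1) :=
    Measure.toSphere_apply_univ _
  have hne : (volume : Measure (EuclideanSpace ℝ (Fin d))).toSphere Set.univ ≠ 0 := by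
    rw [h]
    apply mul_ne_zero
    · simp [finrank_euclideanSpace]
      omega
    · exact (Metric.measure_ball_pos _ _ one_pos).ne'
  have htop : (volume : Measure (EuclideanSpace ℝ (Fin d))).toSphere Set.univ ≠ ⊤ :=
    (measure_lt_top _ _).ne
  exact ENNReal.inv_mul_cancel hne htop

/-- The squared Wasserstein distance is bounded above by the projected Wasserstein distance,
i.e. the average of `SWGG` over directions `θ` drawn uniformly on the unit sphere. -/
theorem wsq_le_PWD {n d : ℕ} (hn : 1 ≤ n) (hd : 2 ≤ d)
    (x y : Fin n → EuclideanSpace ℝ (Fin d))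
    (σ τ : Metric.sphere (0 : EuclideanSpace ℝ (Fin d)) 1 → Equiv.Perm (Fin n))
    (hσ : ∀ θ : Metric.sphere (0 : EuclideanSpace ℝ (Fin d)) 1,
      IsSorting (θ : EuclideanSpace ℝ (Fin d)) x (σ θ))
    (hτ : ∀ θ : Metric.sphere (0 : EuclideanSpace ℝ (Fin d)) 1,
      IsSorting (θ : EuclideanSpace ℝ (Fin d)) y (τ θ))
    (hmeas : Measurable fun θ : Metric.sphere (0 : EuclideanSpace ℝ (Fin d)) 1 =>
      SWGG x y (σ θ) (τ θ)) :
    Wsq x y ≤ ∫ θ, SWGG x y (σ θ) (τ θ) ∂(uniformSphere d) := by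
  have hprob := uniformSphere_isProbability d (by omega)
  -- SWGG takes finitely many values, hence is bounded
  obtain ⟨C, hC⟩ : ∃ C : ℝ, ∀ θ, ‖SWGG x y (σ θ) (τ θ)‖ ≤ C := by
    have : Finite (Equiv.Perm (Fin n) × Equiv.Perm (Fin n)) := inferInstance
    obtain ⟨C, hC⟩ := Finite.exists_le (fun p : Equiv.Perm (Fin n) × Equiv.Perm (Fin n) =>
      ‖SWGG x y p.1 p.2‖)
    exact ⟨C, fun θ => hC (σ θ, τ θ)⟩
  have hint : Integrable (fun θ => SWGG x y (σ θ) (τ θ)) (uniformSphere d) :=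
    (integrable_const C).mono' hmeas.aestronglyMeasurable (Filter.Eventually.of_forall hC)
  calc Wsq x y = ∫ _θ, Wsq x y ∂(uniformSphere d) := by
        rw [integral_const, probReal_univ]; simp
    _ ≤ ∫ θ, SWGG x y (σ θ) (τ θ) ∂(uniformSphere d) :=
        integral_mono (integrable_const _) hint (fun θ => wsq_le_swgg x y (σ θ) (τ θ))
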